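/- Let X be a connected, locally connected, cutpoint-free T₁ topological space and let x, x' ∈ X. Assume that X ∖ {x, x'} has at least three connected components. If y, z ∈ X are contained in two distinct connected components of X ∖ {x, x'}, then X ∖ {y, z} is connected. -/
import Mathlib

open Set Topology

/-- In a locally connected space, the closure of a connected component of an open set
meets the open set only in the component itself. -/
lemma aux_closure_cci_inter {X : Type*} [TopologicalSpace X] [LocallyConnectedSpace X]
    {U : Set X} (hU : IsOpen U) (w : X) :
    closure (connectedComponentIn U w) ∩ U ⊆ connectedComponentIn U w := by
  rintro v ⟨hvc, hvU⟩
  have hopen : IsOpen (connectedComponentIn U v) := hU.connectedComponentIn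
  have hmem : v ∈ connectedComponentIn U v := mem_connectedComponentIn hvU
  obtain ⟨u, huv, huK⟩ := mem_closure_iff.mp hvc _ hopen hmem
  have h1 := connectedComponentIn_eq huv
  have h2 := connectedComponentIn_eq huK
  rw [h2, ← h1]
  exact hmem

/-- A nonempty open set whose closure adds at most the point `p`, in a space where `{p}ᶜ` is
preconnected, must contain all of `{p}ᶜ`. -/
lemma aux_clopen_escape {X : Type*} [TopologicalSpace X] {p w : X} {K : Set X}
    (hp : IsPreconnected ({p}ᶜ : Set X)) (hK : IsOpen K)
    (hcl : closure K ⊆ K ∪ {p}) (hpK : p ∉ K) (hw : w ∈ K) :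
    ({p}ᶜ : Set X) ⊆ K := by
  refine hp.subset_left_of_subset_union hK isClosed_closure.isOpen_compl
    (disjoint_compl_right.mono_left subset_closure) ?_ ?_
  · intro q hq
    by_cases h : q ∈ closure K
    · exact Or.inl ((hcl h).resolve_right (by simpa using hq))
    · exact Or.inr h
  · exact ⟨w, fun h => hpK (h ▸ hw), hw⟩

/-- `x` is in the closure of each connected component of `{x, x'}ᶜ`,
provided there is a point of `{x, x'}ᶜ` outside the component. -/
lemma aux_cutpt_mem_closure {X : Type*} [TopologicalSpace X] [LocallyConnectedSpace X]
    [T1Space X] (hcut : ∀ p : X, IsConnected ({p}ᶜ : Set X))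
    {x x' w w' : X} (hw : w ∈ (({x, x'} : Set X)ᶜ)) (hw' : w' ∈ (({x, x'} : Set X)ᶜ))
    (hne : w' ∉ connectedComponentIn (({x, x'} : Set X)ᶜ) w) :
    x ∈ closure (connectedComponentIn (({x, x'} : Set X)ᶜ) w) := by
  set s : Set X := ({x, x'} : Set X)ᶜ with hs
  have hsopen : IsOpen s := ((Set.finite_singleton x').insert x).isClosed.isOpen_compl
  set K := connectedComponentIn s w with hK
  by_contra hx
  have hclK : closure K ⊆ K ∪ {x'} := by
    intro q hq
    by_cases hqs : q ∈ s
    · exact Or.inl (aux_closure_cci_inter hsopen w ⟨hq, hqs⟩)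
    · have hq2 : q ∈ ({x, x'} : Set X) := not_not.mp hqs
      rcases hq2 with h | h
      · exact absurd (h ▸ hq) hx
      · exact Or.inr h
  have hx'K : x' ∉ K := fun h => (connectedComponentIn_subset s w h) (by simp)
  have hwK : w ∈ K := mem_connectedComponentIn hw
  have hsub : ({x'}ᶜ : Set X) ⊆ K := aux_clopen_escape (hcut x').2
    (hsopen.connectedComponentIn) hclK hx'K hwK
  have hw'x' : w' ≠ x' := fun h => hw' (by simp [h])
  exact hne (hsub (by simpa using hw'x'))

/-- The component of `w` in `Cy ∖ {y}` together with a cut point gives a preconnected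
set inside `{y, z}ᶜ` reaching the cut pair. -/
lemma aux_piece {X : Type*} [TopologicalSpace X] [LocallyConnectedSpace X] [T1Space X]
    (hcut : ∀ p : X, IsConnected ({p}ᶜ : Set X)) {x x' y z w : X}
    (hy : y ∈ (({x, x'} : Set X)ᶜ)) (hz : z ∈ (({x, x'} : Set X)ᶜ))
    (hyz : connectedComponentIn (({x, x'} : Set X)ᶜ) y ≠
      connectedComponentIn (({x, x'} : Set X)ᶜ) z)
    (hw : w ∈ connectedComponentIn (({x, x'} : Set X)ᶜ) y) (hwy : w ≠ y) :
    ∃ t : Set X, t ⊆ (({y, z} : Set X)ᶜ) ∧ w ∈ t ∧ IsPreconnected t ∧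
      ∃ q ∈ ({x, x'} : Set X), q ∈ t := by
  set s : Set X := ({x, x'} : Set X)ᶜ with hs
  have hsopen : IsOpen s := ((Set.finite_singleton x').insert x).isClosed.isOpen_compl
  set Cy := connectedComponentIn s y with hCy
  have hCyopen : IsOpen Cy := hsopen.connectedComponentIn
  set U : Set X := Cy \ {y} with hU
  have hUopen : IsOpen U := hCyopen.sdiff isClosed_singleton
  have hwU : w ∈ U := ⟨hw, by simpa using hwy⟩
  set K := connectedComponentIn U w with hK
  have hKU : K ⊆ U := connectedComponentIn_subset U w
  have hwK : w ∈ K := mem_connectedComponentIn hwU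
  have hzCy : z ∉ Cy := fun h => hyz ((connectedComponentIn_eq h).trans
    (connectedComponentIn_eq (mem_connectedComponentIn hz)).symm)
  have hyU : y ∉ U := fun h => h.2 rfl
  have hclK : closure K ⊆ K ∪ ({x, x'} : Set X) ∪ {y} := by
    intro q hq
    by_cases hqU : q ∈ U
    · exact Or.inl (Or.inl (aux_closure_cci_inter hUopen w ⟨hq, hqU⟩))
    · have hqCy : q ∈ closure Cy := closure_mono (hKU.trans Set.diff_subset) hq
      by_cases hqs : q ∈ s
      · have hqC : q ∈ Cy := aux_closure_cci_inter hsopen y ⟨hqCy, hqs⟩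
        have hqy : q = y := by
          by_contra hqy
          exact hqU ⟨hqC, by simpa using hqy⟩
        exact Or.inr (hqy ▸ rfl)
      · exact Or.inl (Or.inr (not_not.mp hqs))
  have hqex : ∃ q ∈ ({x, x'} : Set X), q ∈ closure K := by
    by_contra hcon
    push_neg at hcon
    have hclK' : closure K ⊆ K ∪ {y} := by
      intro q hq
      rcases hclK hq with (h | h) | h
      · exact Or.inl h
      · exact absurd hq (hcon q h)
      · exact Or.inr h
    have hyK : y ∉ K := fun h => hyU (hKU h)
    have hsub : ({y}ᶜ : Set X) ⊆ K := aux_clopen_escape (hcut y).2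
      (hUopen.connectedComponentIn) hclK' hyK hwK
    have hzy : z ≠ y := by
      exact fun h => hyz (congrArg (connectedComponentIn s) h).symm
    exact hzCy (hKU (hsub (by simpa using hzy))).1
  obtain ⟨q, hqxx, hqcl⟩ := hqex
  refine ⟨K ∪ {q}, ?_, Or.inl hwK, ?_, q, hqxx, Or.inr rfl⟩
  · rintro v (hv | hv)
    · have hvU := hKU hv
      simp only [mem_compl_iff, mem_insert_iff, mem_singleton_iff]
      push_neg
      exact ⟨fun h => hvU.2 (by simpa using h), fun h => hzCy (h ▸ hvU.1)⟩
    · rw [mem_singleton_iff] at hv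
      subst hv
      simp only [mem_compl_iff, mem_insert_iff, mem_singleton_iff]
      push_neg
      exact ⟨fun h => hy (h ▸ hqxx), fun h => hz (h ▸ hqxx)⟩
  · exact isPreconnected_connectedComponentIn.subset_closure Set.subset_union_left
      (Set.union_subset subset_closure (by simpa using hqcl))

/-- Let `X` be a connected, locally connected, cutpoint-free T₁ space and
let `x, x' ∈ X`.  Assume `X ∖ {x, x'}` has at least three connected components.  If
`y, z ∈ X` lie in two distinct connected components of `X ∖ {x, x'}` then `X ∖ {y, z}`
is connected. -/
theorem compl_pair_connected_of_separated_by_big_cut_pair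
    {X : Type*} [TopologicalSpace X] [ConnectedSpace X] [LocallyConnectedSpace X] [T1Space X]
    (hcut : ∀ p : X, IsConnected ({p}ᶜ : Set X))
    (x x' : X)
    (hbig : ∃ a b c : ConnectedComponents ↥(({x, x'} : Set X)ᶜ), a ≠ b ∧ a ≠ c ∧ b ≠ c)
    (y z : X) (hy : y ∈ (({x, x'} : Set X)ᶜ)) (hz : z ∈ (({x, x'} : Set X)ᶜ))
    (hyz : connectedComponentIn (({x, x'} : Set X)ᶜ) y ≠
      connectedComponentIn (({x, x'} : Set X)ᶜ) z) :
    IsConnected (({y, z} : Set X)ᶜ) := by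
  set s : Set X := ({x, x'} : Set X)ᶜ with hs
  have hsopen : IsOpen s := ((Set.finite_singleton x').insert x).isClosed.isOpen_compl
  set Cy := connectedComponentIn s y with hCy
  set Cz := connectedComponentIn s z with hCz
  have hyx : y ≠ x := fun h => hy (by simp [h])
  have hyx' : y ≠ x' := fun h => hy (by simp [h])
  have hzx : z ≠ x := fun h => hz (by simp [h])
  have hzx' : z ≠ x' := fun h => hz (by simp [h])
  have hxmem : x ∈ (({y, z} : Set X)ᶜ) := by simp [Ne.symm hyx, Ne.symm hzx]
  have hx'mem : x' ∈ (({y, z} : Set X)ᶜ) := by simp [Ne.symm hyx', Ne.symm hzx']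
  have hsymm : (({x', x} : Set X)ᶜ) = s := by rw [hs, Set.pair_comm]
  -- a third component exists
  obtain ⟨w₃, hw₃s, h3y, h3z⟩ : ∃ w₃, w₃ ∈ s ∧ connectedComponentIn s w₃ ≠ Cy ∧
      connectedComponentIn s w₃ ≠ Cz := by
    obtain ⟨a, b, c, hab, hac, hbc⟩ := hbig
    obtain ⟨pa, rfl⟩ := ConnectedComponents.surjective_coe a
    obtain ⟨pb, rfl⟩ := ConnectedComponents.surjective_coe b
    obtain ⟨pc, rfl⟩ := ConnectedComponents.surjective_coe c
    have himg : ∀ p q : ↥s, connectedComponentIn s ↑p = connectedComponentIn s ↑q →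
        (p : ConnectedComponents ↥s) = q := by
      intro p q h
      rw [connectedComponentIn_eq_image p.2, connectedComponentIn_eq_image q.2] at h
      exact ConnectedComponents.coe_eq_coe.mpr
        ((Set.image_injective.mpr Subtype.val_injective) h)
    by_cases h1 : connectedComponentIn s ↑pa ≠ Cy ∧ connectedComponentIn s ↑pa ≠ Cz
    · exact ⟨pa, pa.2, h1⟩
    by_cases h2 : connectedComponentIn s ↑pb ≠ Cy ∧ connectedComponentIn s ↑pb ≠ Cz
    · exact ⟨pb, pb.2, h2⟩
    rw [not_and_or, not_ne_iff, not_ne_iff] at h1 h2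
    refine ⟨pc, pc.2, fun hcy => ?_, fun hcz => ?_⟩
    · rcases h1 with h1 | h1
      · exact hac (himg _ _ (hcy.trans h1.symm)).symm
      · rcases h2 with h2 | h2
        · exact hbc (himg _ _ (hcy.trans h2.symm)).symm
        · exact hab (himg _ _ (h1.trans h2.symm))
    · rcases h1 with h1 | h1
      · rcases h2 with h2 | h2
        · exact hab (himg _ _ (h1.trans h2.symm))
        · exact hbc (himg _ _ (hcz.trans h2.symm)).symm
      · exact hac (himg _ _ (hcz.trans h1.symm)).symm
  -- a component distinct from `Cy` and `Cz`, together with `{x, x'}`, is preconnected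
  have comp_piece : ∀ w', w' ∈ s → connectedComponentIn s w' ≠ Cy →
      connectedComponentIn s w' ≠ Cz →
      ∃ t : Set X, t ⊆ (({y, z} : Set X)ᶜ) ∧ x ∈ t ∧ x' ∈ t ∧ w' ∈ t ∧ IsPreconnected t := by
    intro w' hw's hwy hwz
    set D := connectedComponentIn s w' with hD
    have hyD : y ∉ D := fun h => hwy ((connectedComponentIn_eq h).trans
      (connectedComponentIn_eq (mem_connectedComponentIn hy)).symm)
    have hzD : z ∉ D := fun h => hwz ((connectedComponentIn_eq h).trans
      (connectedComponentIn_eq (mem_connectedComponentIn hz)).symm)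
    have hxcl : x ∈ closure D := aux_cutpt_mem_closure hcut hw's hy hyD
    have hx'cl : x' ∈ closure D := by
      have h1 : w' ∈ (({x', x} : Set X)ᶜ) := hsymm ▸ hw's
      have h2 : y ∈ (({x', x} : Set X)ᶜ) := hsymm ▸ hy
      have h3 : y ∉ connectedComponentIn (({x', x} : Set X)ᶜ) w' := by
        rw [hsymm]; exact hyD
      have := aux_cutpt_mem_closure hcut h1 h2 h3
      rwa [hsymm] at this
    refine ⟨D ∪ ({x, x'} : Set X), ?_, Or.inr (by simp), Or.inr (by simp),
      Or.inl (mem_connectedComponentIn hw's), ?_⟩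
    · rintro v (hv | hv)
      · simp only [mem_compl_iff, mem_insert_iff, mem_singleton_iff]
        push_neg
        exact ⟨fun h => hyD (h ▸ hv), fun h => hzD (h ▸ hv)⟩
      · rcases hv with h | h
        · exact h ▸ hxmem
        · exact (mem_singleton_iff.mp h) ▸ hx'mem
    · refine isPreconnected_connectedComponentIn.subset_closure Set.subset_union_left
        (Set.union_subset subset_closure ?_)
      rintro q (rfl | hq)
      · exact hxcl
      · exact (mem_singleton_iff.mp hq) ▸ hx'cl
  obtain ⟨E, hEsub, hxE, hx'E, hw₃E, hEpc⟩ := comp_piece w₃ hw₃s h3y h3z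
  constructor
  · exact ⟨x, hxmem⟩
  · apply isPreconnected_of_forall x
    intro w hw
    have hwy : w ≠ y := fun h => hw (by simp [h])
    have hwz : w ≠ z := fun h => hw (by simp [h])
    by_cases hws : w ∈ s
    · by_cases hwCy : w ∈ Cy
      · obtain ⟨t, htsub, hwt, htpc, q, hq, hqt⟩ := aux_piece hcut hy hz hyz hwCy hwy
        refine ⟨t ∪ E, Set.union_subset htsub hEsub, Or.inr hxE, Or.inl hwt, ?_⟩
        refine IsPreconnected.union q hqt ?_ htpc hEpc
        rcases hq with rfl | hq
        · exact hxE
        · exact (mem_singleton_iff.mp hq) ▸ hx'E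
      · by_cases hwCz : w ∈ Cz
        · have hyz' : connectedComponentIn s z ≠ connectedComponentIn s y := hyz.symm
          obtain ⟨t, htsub, hwt, htpc, q, hq, hqt⟩ := aux_piece hcut hz hy hyz' hwCz hwz
          rw [Set.pair_comm z y] at htsub
          refine ⟨t ∪ E, Set.union_subset htsub hEsub, Or.inr hxE, Or.inl hwt, ?_⟩
          refine IsPreconnected.union q hqt ?_ htpc hEpc
          rcases hq with rfl | hq
          · exact hxE
          · exact (mem_singleton_iff.mp hq) ▸ hx'E
        · have hDy : connectedComponentIn s w ≠ Cy := by
            intro h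
            exact hwCy (h ▸ mem_connectedComponentIn hws)
          have hDz : connectedComponentIn s w ≠ Cz := by
            intro h
            exact hwCz (h ▸ mem_connectedComponentIn hws)
          obtain ⟨t, htsub, hxt, _, hwt, htpc⟩ := comp_piece w hws hDy hDz
          exact ⟨t, htsub, hxt, hwt, htpc⟩
    · have hwxx : w ∈ ({x, x'} : Set X) := not_not.mp hws
      refine ⟨E, hEsub, hxE, ?_, hEpc⟩
      rcases hwxx with rfl | h
      · exact hxE
      · exact (mem_singleton_iff.mp h) ▸ hx'E
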